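/- Deterministic comparison lemma: for the centered matrix Y = (Iₙ − (1/n)𝟙ₙ𝟙ₙᵀ)X with rows Y_i and noise vectors Z_i = X_i − 𝔼X_i, for every x ∈ {−1,1}ⁿ: Σ_{i=1}^n x_i ⟨Y_i − 𝔼Y_i, μ^{(1)} − μ^{(2)}⟩ ≤ (2(n−1)/n) Σ_{i=1}^n |⟨Z_i, μ^{(1)} − μ^{(2)}⟩|. -/
import Mathlib


open MeasureTheory ProbabilityTheory Matrix Finset
open scoped BigOperators ENNReal

noncomputable section

/-- Trace inner product of square matrices: `⟨A, B⟩ = tr(AᵀB)`. -/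
def mip {n : ℕ} (A B : Matrix (Fin n) (Fin n) ℝ) : ℝ := (Aᵀ * B).trace

/-- Entrywise ℓ¹ norm of a matrix. -/
def l1 {n : ℕ} (M : Matrix (Fin n) (Fin n) ℝ) : ℝ := ∑ i, ∑ j, |M i j|

/-- Frobenius norm of a matrix. -/
def frob {n p : ℕ} (M : Matrix (Fin n) (Fin p) ℝ) : ℝ := Real.sqrt (∑ i, ∑ j, (M i j) ^ 2)

/-- ℓ² → ℓ² operator norm of a (rectangular) real matrix. -/
def opN {n p : ℕ} (M : Matrix (Fin n) (Fin p) ℝ) : ℝ :=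
  ‖LinearMap.toContinuousLinearMap (Matrix.toEuclideanLin M)‖

/-- The ψ₂ (sub-gaussian) norm of a real random variable:
`inf {t > 0 : 𝔼 exp(f² / t²) ≤ 2}`. -/
def psi2 {Ω : Type} [MeasurableSpace Ω] (P : MeasureTheory.Measure Ω) (f : Ω → ℝ) : ℝ :=
  sInf {t : ℝ | 0 < t ∧ ∫ ω, Real.exp (f ω ^ 2 / t ^ 2) ∂P ≤ 2}

/-- The feasible set `M_opt = {Z : Z ⪰ 0, diag(Z) = Iₙ}`. -/
def Mopt (n : ℕ) : Set (Matrix (Fin n) (Fin n) ℝ) :=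
  {Z | Z.PosSemidef ∧ ∀ i, Z i i = 1}

/-- The all-ones matrix `Eₙ = 𝟙ₙ𝟙ₙᵀ`. -/
def En (n : ℕ) : Matrix (Fin n) (Fin n) ℝ := Matrix.of fun _ _ => 1

/-- The globally centered data matrix `Y = (Iₙ − (1/n)𝟙ₙ𝟙ₙᵀ) X`. -/
def centerM {n p : ℕ} (X : Matrix (Fin n) (Fin p) ℝ) : Matrix (Fin n) (Fin p) ℝ :=
  Matrix.of fun i k => X i k - (1 / (n : ℝ)) * ∑ l, X l k

/-- `λ = (2/(n(n−1))) Σ_{i<j} ⟨Y_i, Y_j⟩`. -/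
def lamOf {n p : ℕ} (Y : Matrix (Fin n) (Fin p) ℝ) : ℝ :=
  (2 / ((n : ℝ) * ((n : ℝ) - 1))) * ∑ i, ∑ j, if i < j then Y i ⬝ᵥ Y j else 0

/-- `τ = (1/n) Σ_i ⟨Y_i, Y_i⟩`. -/
def tauOf {n p : ℕ} (Y : Matrix (Fin n) (Fin p) ℝ) : ℝ := (1 / (n : ℝ)) * ∑ i, Y i ⬝ᵥ Y i

/-- SDP1 objective: `⟨YYᵀ − λ Eₙ, Z⟩`. -/
def sdp1Obj {n p : ℕ} (Y : Matrix (Fin n) (Fin p) ℝ) (Z : Matrix (Fin n) (Fin n) ℝ) : ℝ :=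
  mip (Y * Yᵀ - lamOf Y • En n) Z

/-- `Z` is an optimal solution of SDP1 for centered data `Y`. -/
def isSDP1opt {n p : ℕ} (Y : Matrix (Fin n) (Fin p) ℝ) (Z : Matrix (Fin n) (Fin n) ℝ) : Prop :=
  Z ∈ Mopt n ∧ ∀ Z' ∈ Mopt n, sdp1Obj Y Z' ≤ sdp1Obj Y Z

/-- The group membership vector `u₂` (`1` on `C₁`, `−1` on its complement). -/
def u2v {n : ℕ} (C1 : Finset (Fin n)) : Fin n → ℝ := fun j => if j ∈ C1 then 1 else -1

/-- `Z* = u₂u₂ᵀ`. -/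
def Zstar {n : ℕ} (C1 : Finset (Fin n)) : Matrix (Fin n) (Fin n) ℝ :=
  Matrix.of fun i j => u2v C1 i * u2v C1 j

/-- deterministic comparison lemma for the centered rows. -/
theorem stmt_9 (n p : ℕ) (hn : 0 < n)
    (C1 : Finset (Fin n))
    (μ1 μ2 : Fin p → ℝ)
    (X : Fin n → Fin p → ℝ)
    (Z : Fin n → Fin p → ℝ)
    (hZ : ∀ j k, Z j k = X j k - if j ∈ C1 then μ1 k else μ2 k)
    (Yd : Fin n → Fin p → ℝ)
    -- Y_i − 𝔼Y_i = Z_i − (1/n) Σ_k Z_k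
    (hYd : ∀ j k, Yd j k = Z j k - (1 / (n : ℝ)) * ∑ l, Z l k)
    (d : Fin p → ℝ) (hd : ∀ k, d k = μ1 k - μ2 k) :
    ∀ x : Fin n → ℝ, (∀ i, x i = 1 ∨ x i = -1) →
      ∑ i, x i * (Yd i ⬝ᵥ d) ≤
        (2 * ((n : ℝ) - 1) / n) * ∑ i, |Z i ⬝ᵥ d| := by
  intro x hx
  have hn' : (0 : ℝ) < n := by exact_mod_cast hn
  set a : Fin n → ℝ := fun i => Z i ⬝ᵥ d with ha
  have key : ∀ i, Yd i ⬝ᵥ d = a i - (1 / (n : ℝ)) * ∑ l, a l := by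
    intro i
    simp only [ha, dotProduct]
    simp only [hYd, sub_mul, Finset.sum_sub_distrib, Finset.mul_sum]
    congr 1
    rw [Finset.sum_comm]
    apply Finset.sum_congr rfl
    intro l _
    rw [Finset.sum_mul]
    apply Finset.sum_congr rfl
    intro k _
    ring
  have lhs_eq : ∑ i, x i * (Yd i ⬝ᵥ d)
      = ∑ i, a i * (x i - (1 / (n : ℝ)) * ∑ j, x j) := by
    simp only [key, mul_sub, sub_mul, Finset.sum_sub_distrib]
    congr 1
    · apply Finset.sum_congr rfl; intro i _; ring
    · rw [← Finset.sum_mul]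
      ring_nf
      rw [Finset.mul_sum]
  rw [lhs_eq]
  have hc : ∀ i, |x i - (1 / (n : ℝ)) * ∑ j, x j| ≤ 2 * ((n : ℝ) - 1) / n := by
    intro i
    have hrw : x i - (1 / (n : ℝ)) * ∑ j, x j
        = (1 / (n : ℝ)) * ∑ j, (x i - x j) := by
      rw [Finset.mul_sum, Finset.sum_sub_distrib, Finset.sum_const, Finset.card_univ,
        Fintype.card_fin, nsmul_eq_mul, mul_sub, Finset.mul_sum]
      field_simp
    rw [hrw, abs_mul, abs_of_pos (by positivity : (0:ℝ) < 1 / (n:ℝ))]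
    have hb : |∑ j, (x i - x j)| ≤ 2 * ((n : ℝ) - 1) := by
      calc |∑ j, (x i - x j)| ≤ ∑ j, |x i - x j| := Finset.abs_sum_le_sum_abs _ _
        _ ≤ ∑ j : Fin n, (if j = i then 0 else 2) := by
            apply Finset.sum_le_sum
            intro j _
            by_cases h : j = i
            · simp [h]
            · simp only [h, if_false]
              rcases hx i with hi | hi <;> rcases hx j with hj | hj <;>
                rw [hi, hj] <;> norm_num
        _ = 2 * ((n : ℝ) - 1) := by
            rw [Finset.sum_ite]
            simp only [Finset.sum_const, Finset.sum_const_zero, nsmul_eq_mul, zero_add,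
              Finset.filter_ne', Finset.card_erase_of_mem (Finset.mem_univ i),
              Finset.card_univ, Fintype.card_fin]
            push_cast [Nat.cast_sub hn]
            ring
    calc (1 / (n:ℝ)) * |∑ j, (x i - x j)| ≤ (1 / (n:ℝ)) * (2 * ((n:ℝ) - 1)) := by
          apply mul_le_mul_of_nonneg_left hb (by positivity)
      _ = 2 * ((n : ℝ) - 1) / n := by ring
  calc ∑ i, a i * (x i - (1 / (n : ℝ)) * ∑ j, x j)
      ≤ ∑ i, |a i| * (2 * ((n : ℝ) - 1) / n) := by
        apply Finset.sum_le_sum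
        intro i _
        calc a i * (x i - (1 / (n : ℝ)) * ∑ j, x j)
            ≤ |a i * (x i - (1 / (n : ℝ)) * ∑ j, x j)| := le_abs_self _
          _ = |a i| * |x i - (1 / (n : ℝ)) * ∑ j, x j| := abs_mul _ _
          _ ≤ |a i| * (2 * ((n : ℝ) - 1) / n) :=
              mul_le_mul_of_nonneg_left (hc i) (abs_nonneg _)
    _ = (2 * ((n : ℝ) - 1) / n) * ∑ i, |Z i ⬝ᵥ d| := by
        rw [← Finset.sum_mul]; ring
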